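/- arXiv:1612.03084 — 2 statements merged into one kernel-verified Lean document; each statement's English description precedes it below -/
import Mathlib

section
/- Let n ≥ 1 and let λ be a bi-Perron algebraic unit that is a root of some monic palindromic polynomial in ℤ[X] of degree at most 2n. Then y = λ + 1/λ is a real algebraic integer with y > 2, the degree of the minimal polynomial of y over ℚ is at most n, and every Galois conjugate of y has absolute value at most y. -/
open Polynomial

/-- A bi-Perron algebraic unit: a real algebraic unit `λ > 1` all of whose Galois
conjugates `μ` satisfy `1/λ ≤ |μ| ≤ λ`. -/
def IsBiPerronUnit (l : ℝ) : Prop :=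
  1 < l ∧ IsIntegral ℤ l ∧ IsIntegral ℤ l⁻¹ ∧
    ∀ μ ∈ (minpoly ℚ l).aroots ℂ, 1 / l ≤ ‖μ‖ ∧ ‖μ‖ ≤ l

/-- Evaluating the reverse of a polynomial at the inverse of a nonzero real number. -/
lemma aeval_rev_inv_biPerron {R : Type*} [CommRing R] [Algebra R ℝ] (p : R[X]) (l : ℝ)
    (hl : l ≠ 0) : aeval l⁻¹ p.reverse = 0 ↔ aeval l p = 0 := by
  have : Invertible l := invertibleOfNonzero hl
  rw [aeval_def, aeval_def, ← invOf_eq_inv]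
  exact eval₂_reverse_eq_zero_iff _ _ _

set_option synthInstance.maxHeartbeats 1000000 in
set_option maxHeartbeats 2000000 in
/-- If `λ` is a bi-Perron algebraic unit which is a root of a monic
palindromic integer polynomial of degree at most `2n`, then `y = λ + 1/λ` is a real algebraic
integer with `y > 2`, the minimal polynomial of `y` over `ℚ` has degree at most `n`, and every
Galois conjugate of `y` has absolute value at most `y`. -/
theorem trace_of_biPerron (n : ℕ) (hn : 1 ≤ n) (l : ℝ) (hl : IsBiPerronUnit l)
    (hpal : ∃ p : Polynomial ℤ, p.Monic ∧ p.reverse = p ∧ p.natDegree ≤ 2 * n ∧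
      Polynomial.aeval l p = 0) :
    IsIntegral ℤ (l + 1 / l) ∧
    2 < l + 1 / l ∧
    (minpoly ℚ (l + 1 / l)).natDegree ≤ n ∧
    ∀ μ ∈ (minpoly ℚ (l + 1 / l)).aroots ℂ, ‖μ‖ ≤ l + 1 / l := by
  open IntermediateField in
  obtain ⟨hl1, hlint, hlinvint, hlroots⟩ := hl
  obtain ⟨p, hpm, hprev, hpdeg, hproot⟩ := hpal
  have hlpos : (0:ℝ) < l := lt_trans one_pos hl1
  have hl0 : l ≠ 0 := ne_of_gt hlpos
  -- basic facts
  have hli : IsIntegral ℚ l := hlint.tower_top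
  have hliinv : IsIntegral ℚ l⁻¹ := hlinvint.tower_top
  set y : ℝ := l + 1/l with hy_def
  have hyl : y = l + l⁻¹ := by rw [hy_def, one_div]
  have hyint : IsIntegral ℤ y := by rw [hyl]; exact hlint.add hlinvint
  have hyi : IsIntegral ℚ y := hyint.tower_top
  have hygt2 : 2 < y := by
    rw [hyl]
    nlinarith [sq_nonneg (l - 1), mul_inv_cancel₀ hl0]
  refine ⟨hyint, hygt2, ?_, ?_⟩
  · -- degree bound
    set m := minpoly ℚ l with hm_def
    set P : ℚ[X] := p.map (algebraMap ℤ ℚ) with hP_def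
    have hPmonic : P.Monic := hpm.map _
    have hP0 : P ≠ 0 := hPmonic.ne_zero
    have hPdeg : P.natDegree ≤ 2 * n := by rw [hP_def, hpm.natDegree_map]; exact hpdeg
    have hrootP : aeval l P = 0 := by rwa [hP_def, aeval_map_algebraMap]
    have hrootP' : aeval l⁻¹ P = 0 := by
      rw [hP_def, aeval_map_algebraMap, ← hprev]
      exact (aeval_rev_inv_biPerron p l hl0).mpr hproot
    have hmP : m ∣ P := minpoly.dvd ℚ l hrootP
    have hd2n : m.natDegree ≤ 2 * n := (natDegree_le_of_dvd hmP hP0).trans hPdeg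
    -- setup of fields
    have hyF : y ∈ ℚ⟮l⟯ := by
      rw [hyl]
      exact add_mem (mem_adjoin_simple_self ℚ l) (inv_mem (mem_adjoin_simple_self ℚ l))
    set E : IntermediateField ℚ ℝ := ℚ⟮y⟯ with hE_def
    set F : IntermediateField ℚ ℝ := ℚ⟮l⟯ with hF_def
    have hEF : E ≤ F := adjoin_le_iff.mpr (Set.singleton_subset_iff.mpr hyF)
    haveI hFD : FiniteDimensional ℚ F := adjoin.finiteDimensional hli
    have hfrl : Module.finrank ℚ F = m.natDegree := adjoin.finrank hli
    have hfry : Module.finrank ℚ E = (minpoly ℚ y).natDegree := adjoin.finrank hyi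
    have heled : Module.finrank ℚ E ≤ Module.finrank ℚ F := by
      haveI : Module.Finite ℚ F.toSubalgebra.toSubmodule := hFD
      exact Submodule.finrank_mono (s := E.toSubalgebra.toSubmodule)
        (t := F.toSubalgebra.toSubmodule) (fun x hx => hEF hx)
    by_cases hinv : aeval l⁻¹ m = 0
    · -- case B : 1/l is a conjugate of l
      have hlE : l ∉ E := by
        intro hmem
        have hroots' : l⁻¹ ∈ m.aroots ℝ :=
          (mem_aroots).mpr ⟨minpoly.ne_zero hli, hinv⟩
        set σ : F →ₐ[ℚ] ℝ := (algHomAdjoinIntegralEquiv ℚ hli).symm ⟨l⁻¹, hroots'⟩ with hσ_def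
        have hσgen : σ (AdjoinSimple.gen ℚ l) = l⁻¹ :=
          algHomAdjoinIntegralEquiv_symm_apply_gen ℚ hli ⟨l⁻¹, hroots'⟩
        have hmem' : l ∈ Algebra.adjoin ℚ ({y} : Set ℝ) := by
          rw [← adjoin_simple_toSubalgebra_of_isAlgebraic hyi.isAlgebraic]; exact hmem
        rw [Algebra.adjoin_singleton_eq_range_aeval, AlgHom.mem_range] at hmem'
        obtain ⟨g, hg⟩ := hmem'
        set u : F := AdjoinSimple.gen ℚ l with hu_def
        have hu_coe : (u : ℝ) = l := rfl
        set yF : F := u + u⁻¹ with hyF_def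
        have hyF_coe : (yF : ℝ) = y := by
          rw [hyF_def, hyl, AddMemClass.coe_add, IntermediateField.coe_inv, hu_coe]
        have hkey : aeval yF g = u := by
          apply Subtype.coe_injective
          have h1 : (algebraMap F ℝ) (aeval yF g) = aeval ((yF : ℝ)) g :=
            (aeval_algebraMap_apply ℝ yF g).symm
          rw [hyF_coe, hg] at h1
          exact h1
        have hc : σ u = l := by
          rw [← hkey, ← aeval_algHom_apply]
          have hσy : σ yF = y := by
            rw [hyF_def, map_add, map_inv₀, hσgen, hyl, inv_inv, add_comm]
          rw [hσy, hg]
        rw [hσgen] at hc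
        have h2 : l * l⁻¹ = 1 := mul_inv_cancel₀ hl0
        rw [hc] at h2
        nlinarith
      -- tower argument
      have hyE : y ∈ E := mem_adjoin_simple_self ℚ y
      have hliE : IsIntegral E l := hli.tower_top
      set yE : E := ⟨y, hyE⟩ with hyE_def
      set q : E[X] := X ^ 2 + C (-yE) * X + C 1 with hq_def
      have hq_root : aeval l q = 0 := by
        rw [hq_def]
        simp only [map_add, map_pow, aeval_X, map_mul, aeval_C, map_neg, map_one]
        have hc : (algebraMap E ℝ) yE = y := rfl
        rw [hc, hyl]
        field_simp
        ring
      have hq2 : q.natDegree = 2 := by rw [hq_def]; compute_degree!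
      have hq0 : q ≠ 0 := fun h => by simp [h] at hq2
      have hle2 : (minpoly E l).natDegree ≤ 2 :=
        hq2 ▸ natDegree_le_of_dvd (minpoly.dvd E l hq_root) hq0
      have hge2 : 2 ≤ (minpoly E l).natDegree := by
        refine (minpoly.two_le_natDegree_iff hliE).mpr ?_
        rintro ⟨x, hx⟩
        exact hlE (hx ▸ x.2)
      have hfr2 : Module.finrank E E⟮l⟯ = 2 := by
        rw [adjoin.finrank hliE]; omega
      have heq : (E⟮l⟯).restrictScalars ℚ = F := by
        exact (IntermediateField.restrictScalars_adjoin_eq_sup ℚ E ({l} : Set ℝ)).trans (sup_eq_right.mpr hEF)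
      have hfrEl : Module.finrank ℚ (E⟮l⟯) = Module.finrank ℚ F := by
        rw [← heq]; rfl
      have htower : Module.finrank ℚ E * Module.finrank E E⟮l⟯ = Module.finrank ℚ E⟮l⟯ :=
        Module.finrank_mul_finrank ℚ E E⟮l⟯
      rw [hfr2] at htower
      omega
    · -- case A : 1/l is not a conjugate of l, so minpoly l and minpoly (1/l) are coprime
      set m' := minpoly ℚ l⁻¹ with hm'_def
      have hm'P : m' ∣ P := minpoly.dvd ℚ l⁻¹ hrootP'
      have hmne : m ≠ m' := fun h => hinv (by rw [h]; exact minpoly.aeval ℚ l⁻¹)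
      have hmirr : Irreducible m := minpoly.irreducible hli
      have hm'irr : Irreducible m' := minpoly.irreducible hliinv
      have hndvd : ¬ m ∣ m' := by
        intro hdvd
        exact hmne (eq_of_monic_of_associated (minpoly.monic hli) (minpoly.monic hliinv)
          (associated_of_dvd_dvd hdvd (hmirr.dvd_symm hm'irr hdvd)))
      have hcop : IsCoprime m m' := (dvd_or_isCoprime m m' hmirr).resolve_left hndvd
      have hmul : m * m' ∣ P := hcop.mul_dvd hmP hm'P
      have hsum : m.natDegree + m'.natDegree ≤ 2 * n := by
        rw [← natDegree_mul (minpoly.ne_zero hli) (minpoly.ne_zero hliinv)]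
        exact (natDegree_le_of_dvd hmul hP0).trans hPdeg
      have hle : m.natDegree ≤ m'.natDegree := by
        have hrev' : aeval l m'.reverse = 0 := by
          rw [← inv_inv l]
          exact (aeval_rev_inv_biPerron m' l⁻¹ (by simpa using hl0)).mpr (minpoly.aeval ℚ l⁻¹)
        have hdvd2 : m ∣ m'.reverse := minpoly.dvd ℚ l hrev'
        exact (natDegree_le_of_dvd hdvd2
          (by simp [reverse_eq_zero, hm'_def, minpoly.ne_zero hliinv])).trans m'.reverse_natDegree_le
      omega
  · -- conjugate bound
    have hyF : y ∈ ℚ⟮l⟯ := by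
      rw [hyl]
      exact add_mem (mem_adjoin_simple_self ℚ l) (inv_mem (mem_adjoin_simple_self ℚ l))
    set E : IntermediateField ℚ ℝ := ℚ⟮y⟯ with hE_def
    set F : IntermediateField ℚ ℝ := ℚ⟮l⟯ with hF_def
    have hEF : E ≤ F := adjoin_le_iff.mpr (Set.singleton_subset_iff.mpr hyF)
    intro μ hμ
    set φ : E →ₐ[ℚ] ℂ := (algHomAdjoinIntegralEquiv ℚ hyi).symm ⟨μ, hμ⟩ with hφ_def
    have hφgen : φ (AdjoinSimple.gen ℚ y) = μ :=
      algHomAdjoinIntegralEquiv_symm_apply_gen ℚ hyi ⟨μ, hμ⟩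
    letI : Algebra E F := (inclusion hEF).toAlgebra
    haveI : IsScalarTower ℚ E F :=
      IsScalarTower.of_algebraMap_eq fun q => ((inclusion hEF).commutes q).symm
    haveI : FiniteDimensional ℚ F := adjoin.finiteDimensional hli
    haveI : Module.Finite E F := Module.Finite.of_restrictScalars_finite ℚ E F
    haveI : Algebra.IsAlgebraic E F := Algebra.IsAlgebraic.of_finite E F
    obtain ⟨ψ, hψ⟩ := IsAlgClosed.surjective_restrictDomain_of_isAlgebraic
      (K := ℚ) (L := E) (E := F) (M := ℂ) φ
    set u : F := AdjoinSimple.gen ℚ l with hu_def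
    set z : ℂ := ψ u with hz_def
    have hzroot : z ∈ (minpoly ℚ l).aroots ℂ := by
      refine mem_aroots.mpr ⟨minpoly.ne_zero hli, ?_⟩
      have h1 : aeval u (minpoly ℚ l) = 0 := by
        rw [← minpoly_gen ℚ l]; exact minpoly.aeval ℚ u
      rw [hz_def, aeval_algHom_apply, h1, map_zero]
    obtain ⟨hz1, hz2⟩ := hlroots z hzroot
    have hzabs : (0:ℝ) < ‖z‖ := lt_of_lt_of_le (by positivity) hz1
    have hz0 : z ≠ 0 := fun h => by simp [h] at hzabs
    have hμeq : μ = z + z⁻¹ := by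
      set yF : F := u + u⁻¹ with hyF_def
      have hinc : inclusion hEF (AdjoinSimple.gen ℚ y) = yF := by
        apply Subtype.coe_injective
        show ((inclusion hEF (AdjoinSimple.gen ℚ y) : F) : ℝ) = ((yF : F) : ℝ)
        have h1 : ((inclusion hEF (AdjoinSimple.gen ℚ y) : F) : ℝ) = y := rfl
        rw [h1, hyF_def, AddMemClass.coe_add, IntermediateField.coe_inv]
        have h2 : ((u : F) : ℝ) = l := rfl
        rw [h2, hyl]
      have hψy : ψ yF = μ := by
        rw [← hinc, ← hφgen, ← hψ]
        rfl
      rw [← hψy, hyF_def, map_add, map_inv₀, hz_def]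
    rw [hμeq]
    set t : ℝ := ‖z‖ with ht_def
    calc ‖z + z⁻¹‖ ≤ ‖z‖ + ‖z⁻¹‖ := norm_add_le _ _
      _ = t + t⁻¹ := by rw [norm_inv]
      _ ≤ l + 1/l := by
          rw [one_div]
          rw [one_div] at hz1
          have key : (t - l) * (t - l⁻¹) ≤ 0 := by
            apply mul_nonpos_iff.mpr
            right
            constructor
            · linarith
            · have : l⁻¹ ≤ t := hz1
              linarith
          nlinarith [key, mul_inv_cancel₀ (ne_of_gt hzabs), mul_inv_cancel₀ hl0, hzabs, hlpos]
end

section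
/- Fix n ≥ 2. Let 𝓑_n(R) denote the set of bi-Perron algebraic units λ ≤ R that are roots of some monic palindromic polynomial in ℤ[X] of degree at most 2n. Then there is a constant C > 0 (depending only on n) such that |𝓑_n(R)| ≤ C · R^{n(n+1)/2} for all sufficiently large R. -/
open Polynomial

/-- The set `𝓑_n(R)` of bi-Perron algebraic units `λ ≤ R` which are roots of some monic
palindromic integer polynomial of degree at most `2n`. -/
noncomputable def biPerronUnits (n : ℕ) (R : ℝ) : Set ℝ :=
  {l | IsBiPerronUnit l ∧ l ≤ R ∧
    ∃ p : Polynomial ℤ, p.Monic ∧ p.reverse = p ∧ p.natDegree ≤ 2 * n ∧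
      Polynomial.aeval l p = 0}

namespace BiPerronAux





/-- coefficient lookup: index 0 ↦ 1 (leading coeff), index i+1 ↦ c i. -/
def ccFun (n : ℕ) (c : Fin n → ℤ) : ℕ → ℤ :=
  fun i => if i = 0 then 1 else if h : i - 1 < n then c ⟨i - 1, h⟩ else 0

/-- reconstruction of a polynomial of degree `d` from its top coefficients `c`;
if `b` is true, the bottom half is filled in palindromically. -/
noncomputable def auxPoly (n : ℕ) (b : Bool) (d : ℕ) (c : Fin n → ℤ) : ℤ[X] :=
  ∑ j ∈ Finset.range (d + 1),
    C (if b = true ∧ 2 * j < d then ccFun n c j else ccFun n c (d - j)) * X ^ j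

lemma coeff_auxPoly (n : ℕ) (b : Bool) (d : ℕ) (c : Fin n → ℤ) (j : ℕ) :
    (auxPoly n b d c).coeff j =
      if j < d + 1 then (if b = true ∧ 2 * j < d then ccFun n c j else ccFun n c (d - j))
      else 0 := by
  simp only [auxPoly, finset_sum_coeff, coeff_C_mul, coeff_X_pow, mul_ite, mul_one, mul_zero]
  rw [Finset.sum_ite_eq (Finset.range (d + 1)) j]
  simp [Finset.mem_range]

lemma natDegree_auxPoly_le (n : ℕ) (b : Bool) (d : ℕ) (c : Fin n → ℤ) :
    (auxPoly n b d c).natDegree ≤ d := by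
  apply natDegree_sum_le_of_forall_le
  intro j hj
  refine (natDegree_C_mul_le _ _).trans ?_
  rw [natDegree_X_pow]
  exact Nat.lt_succ_iff.mp (Finset.mem_range.mp hj)

/-- the top-coefficient vector of `q`. -/
def cOf (n d : ℕ) (q : ℤ[X]) : Fin n → ℤ :=
  fun i => if i.1 + 1 ≤ d then q.coeff (d - (i.1 + 1)) else 0

lemma ccFun_cOf {n d : ℕ} (q : ℤ[X]) {i : ℕ} (h0 : i ≠ 0) (hin : i ≤ n) (hid : i ≤ d) :
    ccFun n (cOf n d q) i = q.coeff (d - i) := by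
  unfold ccFun cOf
  rw [if_neg h0, dif_pos (by omega : i - 1 < n)]
  simp only
  rw [if_pos (by omega : (i - 1) + 1 ≤ d)]
  congr 1
  omega

lemma repr_palindromic {n d : ℕ} {q : ℤ[X]} (hq : q.Monic) (hd : q.natDegree = d)
    (hd2n : d ≤ 2 * n) (hrev : q.reverse = q) :
    q = auxPoly n true d (cOf n d q) := by
  have hpal : ∀ k, k ≤ d → q.coeff k = q.coeff (d - k) := by
    intro k hk
    conv_lhs => rw [← hrev]
    rw [coeff_reverse, hd, revAt_le hk]
  have hld : q.coeff d = 1 := by rw [← hd]; exact hq.coeff_natDegree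
  ext j
  rw [coeff_auxPoly]
  by_cases hjd : j < d + 1
  · rw [if_pos hjd]
    by_cases hb : 2 * j < d
    · rw [if_pos ⟨rfl, hb⟩]
      by_cases hj0 : j = 0
      · subst hj0
        simp only [ccFun, if_pos rfl]
        rw [hpal 0 (by omega), Nat.sub_zero, hld]
        simp
      · rw [ccFun_cOf q hj0 (by omega) (by omega)]
        exact hpal j (by omega)
    · rw [if_neg (by simp [hb])]
      by_cases hjd' : j = d
      · subst hjd'
        simp only [Nat.sub_self, ccFun, if_pos rfl]
        exact hld
      · rw [ccFun_cOf q (by omega) (by omega) (by omega)]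
        have : d - (d - j) = j := by omega
        rw [this]
  · rw [if_neg hjd]
    exact coeff_eq_zero_of_natDegree_lt (by omega)

lemma repr_small {n d : ℕ} {q : ℤ[X]} (hq : q.Monic) (hd : q.natDegree = d)
    (hdn : d ≤ n) :
    q = auxPoly n false d (cOf n d q) := by
  have hld : q.coeff d = 1 := by rw [← hd]; exact hq.coeff_natDegree
  ext j
  rw [coeff_auxPoly]
  by_cases hjd : j < d + 1
  · rw [if_pos hjd, if_neg (by simp)]
    by_cases hjd' : j = d
    · subst hjd'
      simp only [Nat.sub_self, ccFun, if_pos rfl]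
      exact hld
    · rw [ccFun_cOf q (by omega) (by omega) (by omega)]
      have : d - (d - j) = j := by omega
      rw [this]
  · rw [if_neg hjd]
    exact coeff_eq_zero_of_natDegree_lt (by omega)





lemma choose_le_pow_real (d k n : ℕ) (h : d ≤ 2 * n) : (d.choose k : ℝ) ≤ 4 ^ n := by
  have h1 : d.choose k ≤ 2 ^ d := by
    rcases le_or_gt k d with hk | hk
    · calc d.choose k ≤ ∑ i ∈ Finset.range (d + 1), d.choose i :=
            Finset.single_le_sum (f := fun i => d.choose i) (fun i _ => Nat.zero_le _)
              (Finset.mem_range.mpr (by omega))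
        _ = 2 ^ d := Nat.sum_range_choose d
    · simp [Nat.choose_eq_zero_of_lt hk]
  have h2 : (2 : ℕ) ^ d ≤ 2 ^ (2 * n) := Nat.pow_le_pow_right (by norm_num) h
  calc (d.choose k : ℝ) ≤ ((2 ^ (2 * n) : ℕ) : ℝ) := by exact_mod_cast le_trans h1 h2
    _ = 4 ^ n := by rw [Nat.cast_pow, pow_mul]; norm_num

lemma minpoly_coeff_bound {l : ℝ} (hl : 1 < l) (hint : IsIntegral ℤ l)
    (hroots : ∀ μ ∈ (minpoly ℚ l).aroots ℂ, 1 / l ≤ ‖μ‖ ∧ ‖μ‖ ≤ l)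
    (j : ℕ) :
    |((minpoly ℤ l).coeff j : ℝ)| ≤
      l ^ ((minpoly ℤ l).natDegree - j) * ((minpoly ℤ l).natDegree.choose j) := by
  set q := minpoly ℤ l with hq
  have hmono : q.Monic := minpoly.monic hint
  have hsplit : Splits (q.map (Int.castRingHom ℂ)) := IsAlgClosed.splits _
  have hmap : q.map (Int.castRingHom ℂ) = (minpoly ℚ l).map (algebraMap ℚ ℂ) := by
    rw [minpoly.isIntegrallyClosed_eq_field_fractions' ℚ hint, Polynomial.map_map]
    congr 1
  have hb : ∀ z ∈ (q.map (Int.castRingHom ℂ)).roots, ‖z‖ ≤ l := by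
    intro z hz
    rw [hmap] at hz
    have := (hroots z (by rwa [aroots_def])).2
    exact this
  have hres := Polynomial.coeff_le_of_roots_le j hmono hsplit hb
  rw [coeff_map] at hres
  simpa using hres

lemma aeval_reverse_eq_zero {f : ℤ[X]} {x : ℝ} (hx : x ≠ 0) (h : aeval x⁻¹ f = 0) :
    aeval x f.reverse = 0 := by
  have hinv : x⁻¹ ≠ 0 := inv_ne_zero hx
  letI : Invertible (x⁻¹) := invertibleOfNonzero hinv
  have h2 := (eval₂_reverse_eq_zero_iff (algebraMap ℤ ℝ) x⁻¹ f).mpr (by rwa [aeval_def] at h)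
  rwa [invOf_eq_inv, inv_inv, ← aeval_def] at h2





lemma aeval_reverse_eq_zero' {f : ℤ[X]} {x : ℝ} (hx : x ≠ 0) (h : aeval x⁻¹ f = 0) :
    aeval x f.reverse = 0 := by
  have hinv : x⁻¹ ≠ 0 := inv_ne_zero hx
  letI : Invertible (x⁻¹) := invertibleOfNonzero hinv
  have h2 := (eval₂_reverse_eq_zero_iff (algebraMap ℤ ℝ) x⁻¹ f).mpr (by rwa [aeval_def] at h)
  rwa [invOf_eq_inv, inv_inv, ← aeval_def] at h2

lemma dichotomy {n : ℕ} {l : ℝ} (hl : 1 < l) (hint : IsIntegral ℤ l)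
    (hinv : IsIntegral ℤ l⁻¹) {p : ℤ[X]} (pm : p.Monic) (prev : p.reverse = p)
    (pdeg : p.natDegree ≤ 2 * n) (proot : aeval l p = 0) :
    (minpoly ℤ l).reverse = minpoly ℤ l ∨ (minpoly ℤ l).natDegree ≤ n := by
  by_cases hrev : (minpoly ℤ l).reverse = minpoly ℤ l
  · exact Or.inl hrev
  right
  set q := minpoly ℤ l with hqdef
  have hl0 : l ≠ 0 := by positivity
  have hqm : q.Monic := minpoly.monic hint
  have hq0 : q ≠ 0 := hqm.ne_zero
  have hp0 : p ≠ 0 := pm.ne_zero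
  have hpl : aeval l⁻¹ p = 0 := by
    rw [← prev]
    exact aeval_reverse_eq_zero' (inv_ne_zero hl0) (by rwa [inv_inv])
  by_cases hql : aeval l⁻¹ q = 0
  · exfalso
    have h1 : aeval l q.reverse = 0 := aeval_reverse_eq_zero' hl0 hql
    have h2 : q ∣ q.reverse := minpoly.isIntegrallyClosed_dvd hint h1
    obtain ⟨t, ht⟩ := h2
    have hrev0 : q.reverse ≠ 0 := fun h => hq0 (reverse_eq_zero.mp h)
    have ht0 : t ≠ 0 := by rintro rfl; rw [mul_zero] at ht; exact hrev0 ht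
    have htdeg : t.natDegree = 0 := by
      have h3 : q.reverse.natDegree ≤ q.natDegree := reverse_natDegree_le q
      have h4 : q.reverse.natDegree = q.natDegree + t.natDegree := by
        rw [ht, natDegree_mul hq0 ht0]
      omega
    obtain ⟨r, hr⟩ := natDegree_eq_zero.mp htdeg
    have h3 : q.coeff 0 * r = 1 := by
      have h5 := congrArg (fun f => Polynomial.coeff f 0) ht
      simp only [coeff_zero_reverse, ← hr, coeff_mul_C] at h5
      rw [← h5, hqm.leadingCoeff]
    rcases Int.mul_eq_one_iff_eq_one_or_neg_one.mp h3 with ⟨hc0, hr1⟩ | ⟨hc0, hr1⟩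
    · apply hrev
      rw [ht, ← hr, hr1]
      simp
    · -- reverse q = -q
      have hrevq : q.reverse = -q := by rw [ht, ← hr, hr1]; simp [mul_comm]
      have heval1 : q.reverse.eval 1 = q.eval 1 := by
        letI : Invertible (1 : ℤ) := invertibleOne
        have := eval₂_reverse_mul_pow (RingHom.id ℤ) (1 : ℤ) q
        rw [invOf_one, one_pow, mul_one] at this
        exact this
      have hz : q.eval 1 = 0 := by
        rw [hrevq] at heval1
        simp only [eval_neg] at heval1
        omega
      have h6 : (X - C (1 : ℤ)) ∣ q := dvd_iff_isRoot.mpr hz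
      obtain ⟨u, hu⟩ := h6
      have hirr := minpoly.irreducible hint
      rcases hirr.isUnit_or_isUnit hu with h | h
      · exact (Polynomial.not_isUnit_of_natDegree_pos _ (by
          rw [natDegree_X_sub_C]; norm_num)) h
      · obtain ⟨r', hr'⟩ := Polynomial.isUnit_iff.mp h
        obtain ⟨hur, hru⟩ := hr'
        have hlead : (1 : ℤ) = r' := by
          have := congrArg Polynomial.leadingCoeff hu
          rw [hqm.leadingCoeff, ← hru, leadingCoeff_mul, leadingCoeff_X_sub_C,
            leadingCoeff_C, one_mul] at this
          exact this
        have hqx : q = X - C 1 := by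
          rw [hu, ← hru, ← hlead]
          simp
        have : aeval l q = 0 := minpoly.aeval ℤ l
        rw [hqx] at this
        simp only [map_sub, aeval_X, aeval_C] at this
        have : l = 1 := by
          have h7 : l - (1 : ℝ) = 0 := by simpa using this
          linarith
        linarith
  · set q' := minpoly ℤ l⁻¹ with hq'def
    have hq'm : q'.Monic := minpoly.monic hinv
    have hq'0 : q' ≠ 0 := hq'm.ne_zero
    have hq'root : aeval l q'.reverse = 0 :=
      aeval_reverse_eq_zero' hl0 (minpoly.aeval ℤ l⁻¹)
    have hqdvd : q ∣ q'.reverse := minpoly.isIntegrallyClosed_dvd hint hq'root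
    have hdd' : q.natDegree ≤ q'.natDegree := by
      refine le_trans (natDegree_le_of_dvd hqdvd ?_) (reverse_natDegree_le q')
      exact fun h => hq'0 (reverse_eq_zero.mp h)
    have hqp : q ∣ p := minpoly.isIntegrallyClosed_dvd hint proot
    have hq'p : q' ∣ p := minpoly.isIntegrallyClosed_dvd hinv hpl
    have hq'prime : Prime q' :=
      UniqueFactorizationMonoid.irreducible_iff_prime.mp (minpoly.irreducible hinv)
    obtain ⟨t, ht⟩ := hqp
    have hq'ndvdq : ¬ q' ∣ q := by
      intro hdvd
      obtain ⟨s, hs⟩ := hdvd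
      apply hql
      rw [hs, map_mul, minpoly.aeval, zero_mul]
    have hq'dvdt : q' ∣ t := by
      have : q' ∣ q * t := ht ▸ hq'p
      exact (hq'prime.dvd_or_dvd this).resolve_left hq'ndvdq
    obtain ⟨s, hs⟩ := hq'dvdt
    have hqq'p : q * q' ∣ p := ⟨s, by rw [ht, hs]; ring⟩
    have hdeg2 : q.natDegree + q'.natDegree ≤ 2 * n := by
      have h := natDegree_le_of_dvd hqq'p hp0
      rw [natDegree_mul hq0 hq'0] at h
      omega
    omega



noncomputable def Mbd (n : ℕ) (R : ℝ) (i : ℕ) : ℤ := ⌈(4 : ℝ) ^ n * R ^ (i + 1)⌉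

noncomputable def cover (n : ℕ) (R : ℝ) : Finset ℝ :=
  (Finset.range (2 * n + 1) ×ˢ (Finset.univ : Finset Bool) ×ˢ
    Fintype.piFinset (fun i : Fin n => Finset.Icc (-(Mbd n R i)) (Mbd n R i))).biUnion
    (fun t => ((auxPoly n t.2.1 t.1 t.2.2).map (Int.castRingHom ℝ)).roots.toFinset)

lemma Mbd_nonneg (n : ℕ) {R : ℝ} (hR : 1 ≤ R) (i : ℕ) : 0 ≤ Mbd n R i := by
  apply Int.ceil_nonneg
  positivity

lemma subset_cover (n : ℕ) {R : ℝ} (hR : 1 ≤ R) :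
    biPerronUnits n R ⊆ ↑(cover n R) := by
  intro l hl
  obtain ⟨⟨hl1, hint, hinv, hroots⟩, hlR, p, pm, prev, pdeg, proot⟩ := hl
  set q := minpoly ℤ l with hqdef
  set d := q.natDegree with hddef
  have hqm : q.Monic := minpoly.monic hint
  have hd1 : 1 ≤ d := minpoly.natDegree_pos hint
  have hqdvd : q ∣ p := minpoly.isIntegrallyClosed_dvd hint proot
  have hd2n : d ≤ 2 * n := le_trans (natDegree_le_of_dvd hqdvd pm.ne_zero) pdeg
  have hl0 : (0 : ℝ) ≤ l := by linarith
  have hcase := dichotomy (n := n) hl1 hint hinv pm prev pdeg proot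
  -- the coefficient vector is in the box
  have hbox : cOf n d q ∈
      Fintype.piFinset (fun i : Fin n => Finset.Icc (-(Mbd n R i)) (Mbd n R i)) := by
    rw [Fintype.mem_piFinset]
    intro i
    rw [Finset.mem_Icc, ← abs_le]
    unfold cOf
    split_ifs with h
    · have hb := minpoly_coeff_bound hl1 hint hroots (d - (i.1 + 1))
      have hde : d - (d - (i.1 + 1)) = i.1 + 1 := by omega
      rw [← hddef, hde] at hb
      have hch : ((d.choose (d - (i.1 + 1)) : ℕ) : ℝ) ≤ 4 ^ n :=
        choose_le_pow_real d _ n hd2n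
      have hpow : l ^ (i.1 + 1) ≤ R ^ (i.1 + 1) :=
        pow_le_pow_left₀ hl0 hlR _
      have hreal : |((q.coeff (d - (i.1 + 1)) : ℤ) : ℝ)| ≤ (Mbd n R i : ℝ) := by
        refine le_trans hb ?_
        refine le_trans ?_ (Int.le_ceil _)
        have h1 : (0 : ℝ) ≤ l ^ (i.1 + 1) := by positivity
        have h2 : (0 : ℝ) ≤ (d.choose (d - (i.1 + 1)) : ℝ) := by positivity
        calc l ^ (i.1 + 1) * (d.choose (d - (i.1 + 1)) : ℝ)
            ≤ R ^ (i.1 + 1) * (4 : ℝ) ^ n := by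
              apply mul_le_mul hpow hch h2 (by positivity)
          _ = (4 : ℝ) ^ n * R ^ (i.1 + 1) := by ring
      rwa [← Int.cast_abs, Int.cast_le] at hreal
    · simpa using Mbd_nonneg n hR i
  have hroot : l ∈ ((q.map (Int.castRingHom ℝ)).roots).toFinset := by
    rw [Multiset.mem_toFinset, mem_roots']
    constructor
    · exact (hqm.map (Int.castRingHom ℝ)).ne_zero
    · rw [IsRoot, eval_map, ← algebraMap_int_eq, ← aeval_def]
      exact minpoly.aeval ℤ l
  rcases hcase with hpal | hsmall
  · refine Finset.mem_biUnion.mpr ⟨⟨d, true, cOf n d q⟩, ?_, ?_⟩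
    · rw [Finset.mem_product]
      refine ⟨Finset.mem_range.mpr (by omega), ?_⟩
      rw [Finset.mem_product]
      exact ⟨Finset.mem_univ _, hbox⟩
    · rw [← repr_palindromic hqm rfl hd2n hpal]
      exact hroot
  · refine Finset.mem_biUnion.mpr ⟨⟨d, false, cOf n d q⟩, ?_, ?_⟩
    · rw [Finset.mem_product]
      refine ⟨Finset.mem_range.mpr (by omega), ?_⟩
      rw [Finset.mem_product]
      exact ⟨Finset.mem_univ _, hbox⟩
    · rw [← repr_small hqm rfl hsmall]
      exact hroot


end BiPerronAux

namespace BiPerronAux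

lemma sum_fin_succ_eq (n : ℕ) : ∑ i : Fin n, (i.1 + 1) = n * (n + 1) / 2 := by
  have h1 : ∑ i : Fin n, (i.1 + 1) = ∑ i ∈ Finset.range n, (i + 1) :=
    Fin.sum_univ_eq_sum_range _ n
  have h2 : ∑ i ∈ Finset.range (n + 1), i
      = (∑ i ∈ Finset.range n, (i + 1)) + 0 :=
    Finset.sum_range_succ' (fun i => i) n
  have h3 := Finset.sum_range_id_mul_two (n + 1)
  have h2' : ∑ i ∈ Finset.range (n + 1), i = ∑ i ∈ Finset.range n, (i + 1) := by
    simpa using h2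
  have h4 : n * (n + 1) = (∑ i ∈ Finset.range n, (i + 1)) * 2 := by
    rw [← h2', h3]
    simp [Nat.mul_comm]
  rw [h1, Nat.div_eq_of_eq_mul_left (by norm_num) h4]

lemma card_cover_le (n : ℕ) {R : ℝ} (hR : 1 ≤ R) :
    ((cover n R).card : ℝ) ≤
      ((2 * (n:ℝ) + 1) * 2 * (2 * n)) * (2 * 4 ^ n + 3) ^ n * R ^ (n * (n + 1) / 2) := by
  set idx := Finset.range (2 * n + 1) ×ˢ (Finset.univ : Finset Bool) ×ˢ
      Fintype.piFinset (fun i : Fin n => Finset.Icc (-(Mbd n R i)) (Mbd n R i)) with hidx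
  have hstep1 : (cover n R).card ≤ idx.card * (2 * n) := by
    refine le_trans Finset.card_biUnion_le ?_
    refine le_trans (Finset.sum_le_card_nsmul _ _ (2 * n) ?_) (by rw [smul_eq_mul])
    rintro ⟨d, b, c⟩ ht
    have hd : d < 2 * n + 1 := by
      have := (Finset.mem_product.mp ht).1
      simpa using this
    calc ((auxPoly n b d c).map (Int.castRingHom ℝ)).roots.toFinset.card
        ≤ Multiset.card ((auxPoly n b d c).map (Int.castRingHom ℝ)).roots :=
          Multiset.toFinset_card_le _
      _ ≤ ((auxPoly n b d c).map (Int.castRingHom ℝ)).natDegree := card_roots' _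
      _ ≤ (auxPoly n b d c).natDegree := natDegree_map_le
      _ ≤ d := natDegree_auxPoly_le n b d c
      _ ≤ 2 * n := by omega
  have hMnn : ∀ i : Fin n, 0 ≤ Mbd n R i := fun i => Mbd_nonneg n hR i
  have hcard : idx.card = (2 * n + 1) * (2 * ∏ i : Fin n, (2 * Mbd n R i + 1).toNat) := by
    rw [hidx, Finset.card_product, Finset.card_product, Finset.card_range,
      Finset.card_univ, Fintype.card_bool, Fintype.card_piFinset]
    have hIcc : ∀ i : Fin n,
        (Finset.Icc (-(Mbd n R i)) (Mbd n R i)).card = (2 * Mbd n R i + 1).toNat := by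
      intro i
      rw [Int.card_Icc]
      congr 1
      ring
    simp only [hIcc]
  have hfac : ∀ i : Fin n, (((2 * Mbd n R i + 1).toNat : ℕ) : ℝ) ≤
      (2 * 4 ^ n + 3) * R ^ (i.1 + 1) := by
    intro i
    have h0 : (0 : ℤ) ≤ 2 * Mbd n R i + 1 := by have := hMnn i; omega
    have he : (((2 * Mbd n R i + 1).toNat : ℕ) : ℝ) = ((2 * Mbd n R i + 1 : ℤ) : ℝ) := by
      exact_mod_cast congrArg (fun z : ℤ => (z : ℝ)) (Int.toNat_of_nonneg h0)
    rw [he]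
    push_cast
    have hceil : ((Mbd n R i : ℤ) : ℝ) < (4 : ℝ) ^ n * R ^ (i.1 + 1) + 1 := by
      unfold Mbd
      exact Int.ceil_lt_add_one _
    have hpow1 : (1 : ℝ) ≤ R ^ (i.1 + 1) := one_le_pow₀ hR
    nlinarith
  have hprodnn : ∀ i : Fin n, (0 : ℝ) ≤ (((2 * Mbd n R i + 1).toNat : ℕ) : ℝ) := by
    intro i; positivity
  calc ((cover n R).card : ℝ) ≤ ((idx.card * (2 * n) : ℕ) : ℝ) := by exact_mod_cast hstep1
    _ = ((2 * (n : ℝ) + 1)) * (2 * ∏ i : Fin n, (((2 * Mbd n R i + 1).toNat : ℕ) : ℝ)) *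
          (2 * n) := by
        rw [hcard]
        push_cast
        ring
    _ ≤ ((2 * (n : ℝ) + 1)) * (2 * ∏ i : Fin n, ((2 * 4 ^ n + 3) * R ^ (i.1 + 1))) *
          (2 * n) := by
        gcongr with i hi
        · exact hfac i
    _ = ((2 * (n : ℝ) + 1) * 2 * (2 * n)) * ((2 * 4 ^ n + 3) ^ n * R ^ (n * (n + 1) / 2)) := by
        rw [Finset.prod_mul_distrib, Finset.prod_const, Finset.card_univ, Fintype.card_fin,
          Finset.prod_pow_eq_pow_sum, sum_fin_succ_eq]
        ring
    _ = ((2 * (n : ℝ) + 1) * 2 * (2 * n)) * (2 * 4 ^ n + 3) ^ n * R ^ (n * (n + 1) / 2) := by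
        ring

end BiPerronAux


/-- `|𝓑_n(R)| ≤ C · R^(n(n+1)/2)` for all sufficiently large `R`. -/
theorem biPerronUnits_card_le (n : ℕ) (hn : 2 ≤ n) :
    ∃ C : ℝ, 0 < C ∧ ∀ᶠ R : ℝ in Filter.atTop,
      ((biPerronUnits n R).ncard : ℝ) ≤ C * R ^ (n * (n + 1) / 2) := by
  refine ⟨((2 * (n : ℝ) + 1) * 2 * (2 * n)) * (2 * 4 ^ n + 3) ^ n + 1, by positivity, ?_⟩
  filter_upwards [Filter.eventually_ge_atTop (1 : ℝ)] with R hR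
  have h1 : (biPerronUnits n R).ncard ≤ (BiPerronAux.cover n R).card := by
    refine le_trans
      (Set.ncard_le_ncard (BiPerronAux.subset_cover n hR) (Finset.finite_toSet _)) ?_
    rw [Set.ncard_coe_finset]
  have h2 := BiPerronAux.card_cover_le n hR
  have hRpow : (0 : ℝ) ≤ R ^ (n * (n + 1) / 2) := by positivity
  have hA : (0 : ℝ) ≤ ((2 * (n : ℝ) + 1) * 2 * (2 * n)) * (2 * 4 ^ n + 3) ^ n := by positivity
  calc ((biPerronUnits n R).ncard : ℝ) ≤ ((BiPerronAux.cover n R).card : ℝ) := by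
        exact_mod_cast h1
    _ ≤ ((2 * (n : ℝ) + 1) * 2 * (2 * n)) * (2 * 4 ^ n + 3) ^ n * R ^ (n * (n + 1) / 2) := h2
    _ ≤ (((2 * (n : ℝ) + 1) * 2 * (2 * n)) * (2 * 4 ^ n + 3) ^ n + 1) *
          R ^ (n * (n + 1) / 2) := by nlinarith
end
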